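/- arXiv:1708.06438 — 2 statements merged into one kernel-verified Lean document; each statement's English description precedes it below -/
import Mathlib

section
/- Let S be a valid SPGM, let t be a node of S with a Vparent s (or with no Vparent, in which case t sends a message to a fictitious root), and let X^t and Z^t denote the X-scope and Z-scope of t. If for every message sent by a child of t occurring in the computation of the messages of t there exists a decomposable SPN over the corresponding scopes whose evaluation function (as a function of partial assignments) equals that message, then for every j in the domain of X_s there exists a decomposable SPN over the variables X^t ∪ Z^t whose evaluation function equals the message μ_{t→s;j} (respectively the root message of t). -/
attribute [local instance] Classical.propDecidable

noncomputable section

/-- Indicator variable `[v]_k` relative to a partial assignment `y`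
(`y v = none` means `v` is unobserved). -/
def Indicator {Var : Type} (y : Var → Option ℕ) (v : Var) (k : ℕ) : ℝ :=
  match y v with
  | none => 1
  | some i => if i = k then 1 else 0

/-- Kinds of nodes of a sum-product graphical model: variable nodes (Vnodes),
product nodes, observed sum nodes and unobserved sum nodes. -/
inductive SPGMKind (Xvar Zvar : Type) : Type where
  | vnode (x : Xvar)
  | prod
  | sumObs (z : Zvar)
  | sumUnobs

/-- A sum-product graphical model (SPGM) over variables `Xvar` (with domain sizes `Xdom`)
and context variables `Zvar` (with domain sizes `Zdom`).  The underlying directed graph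
is given by `children`; acyclicity is encoded by the strictly decreasing `rank`.
`Q`/`W` are the edge weights of observed/unobserved sum nodes (`Q t k` is the weight of the
`k`-th child edge of `t`), `Pcond t s k j` is the conditional table `P_{s,t}(k | j)` used when
`s` is a Vparent of the Vnode `t`, and `Punary t k` is the unary table `P_t(k)` used when the
Vnode `t` has no Vparent. -/
structure SPGM (Xvar Zvar : Type) (Xdom : Xvar → ℕ) (Zdom : Zvar → ℕ) where
  V : Type
  fintypeV : Fintype V
  decEqV : DecidableEq V
  root : V
  kind : V → SPGMKind Xvar Zvar
  children : V → List V
  rank : V → ℕ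
  rank_lt : ∀ t c, c ∈ children t → rank c < rank t
  Q : V → ℕ → ℝ
  W : V → ℕ → ℝ
  Pcond : V → V → ℕ → ℕ → ℝ
  Punary : V → ℕ → ℝ

attribute [instance] SPGM.fintypeV SPGM.decEqV

namespace SPGM

variable {Xvar Zvar : Type} {Xdom : Xvar → ℕ} {Zdom : Zvar → ℕ}

def isVnode (S : SPGM Xvar Zvar Xdom Zdom) (t : S.V) : Prop :=
  ∃ x, S.kind t = SPGMKind.vnode x

def isProd (S : SPGM Xvar Zvar Xdom Zdom) (t : S.V) : Prop :=
  S.kind t = SPGMKind.prod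

def isSumObs (S : SPGM Xvar Zvar Xdom Zdom) (t : S.V) : Prop :=
  ∃ z, S.kind t = SPGMKind.sumObs z

def isSumUnobs (S : SPGM Xvar Zvar Xdom Zdom) (t : S.V) : Prop :=
  S.kind t = SPGMKind.sumUnobs

def isSum (S : SPGM Xvar Zvar Xdom Zdom) (t : S.V) : Prop :=
  S.isSumObs t ∨ S.isSumUnobs t

/-- The variable labeling a node, if any. -/
def label (S : SPGM Xvar Zvar Xdom Zdom) (t : S.V) : Option (Xvar ⊕ Zvar) :=
  match S.kind t with
  | SPGMKind.vnode x => some (Sum.inl x)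
  | SPGMKind.sumObs z => some (Sum.inr z)
  | _ => none

/-- Domain size of the variable of a Vnode (`0` for non-Vnodes). -/
def domOf (S : SPGM Xvar Zvar Xdom Zdom) (t : S.V) : ℕ :=
  match S.kind t with
  | SPGMKind.vnode x => Xdom x
  | _ => 0

/-- Reachability along directed edges. -/
def Reach (S : SPGM Xvar Zvar Xdom Zdom) : S.V → S.V → Prop :=
  Relation.ReflTransGen fun a b => b ∈ S.children a

/-- The scope of a node: all variables labeling nodes of the sub-DAG rooted at it. -/
def scope (S : SPGM Xvar Zvar Xdom Zdom) (t : S.V) : Set (Xvar ⊕ Zvar) :=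
  {v | ∃ u, S.Reach t u ∧ S.label u = some v}

/-- There is a (nonempty) directed path from `s` to `t` containing no intermediate Vnode. -/
inductive ReachNoV (S : SPGM Xvar Zvar Xdom Zdom) : S.V → S.V → Prop where
  | base {s c : S.V} : c ∈ S.children s → ReachNoV S s c
  | step {s t c : S.V} : ReachNoV S s t → ¬ S.isVnode t → c ∈ S.children t → ReachNoV S s c

/-- `s` is a Vparent of `t`. -/
def vparent (S : SPGM Xvar Zvar Xdom Zdom) (s t : S.V) : Prop :=
  S.isVnode s ∧ S.ReachNoV s t

/-- Validity of an SPGM: structural conditions and nonnegativity of all parameters. -/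
structure Valid (S : SPGM Xvar Zvar Xdom Zdom) : Prop where
  xdom_pos : ∀ x : Xvar, 0 < Xdom x
  zdom_pos : ∀ z : Zvar, 0 < Zdom z
  reach_root : ∀ v : S.V, S.Reach S.root v
  vnode_child : ∀ t : S.V, S.isVnode t → (S.children t).length ≤ 1
  vnode_scope : ∀ (t : S.V) (x : Xvar) (c : S.V), S.kind t = SPGMKind.vnode x →
    c ∈ S.children t → Sum.inl x ∉ S.scope c
  sum_child : ∀ t : S.V, S.isSum t → S.children t ≠ []
  sumObs_card : ∀ (t : S.V) (z : Zvar), S.kind t = SPGMKind.sumObs z →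
    (S.children t).length = Zdom z
  sum_scope : ∀ t : S.V, S.isSum t →
    ∀ c ∈ S.children t, ∀ c' ∈ S.children t, S.scope c = S.scope c'
  sumObs_scope : ∀ (t : S.V) (z : Zvar) (c : S.V), S.kind t = SPGMKind.sumObs z →
    c ∈ S.children t → Sum.inr z ∉ S.scope c
  prod_child : ∀ t : S.V, S.isProd t → S.children t ≠ []
  prod_scope : ∀ t : S.V, S.isProd t →
    (S.children t).Pairwise fun c c' => Disjoint (S.scope c) (S.scope c')
  Q_nonneg : ∀ (t : S.V) (k : ℕ), 0 ≤ S.Q t k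
  W_nonneg : ∀ (t : S.V) (k : ℕ), 0 ≤ S.W t k
  Pcond_nonneg : ∀ (t s : S.V) (k j : ℕ), 0 ≤ S.Pcond t s k j
  Punary_nonneg : ∀ (t : S.V) (k : ℕ), 0 ≤ S.Punary t k

/-- The conditional/unary tables of the SPGM are normalized probability tables. -/
structure Normalized (S : SPGM Xvar Zvar Xdom Zdom) : Prop where
  Pcond_sum : ∀ t s : S.V, S.isVnode t → S.vparent s t → ∀ j < S.domOf s,
    ∑ k ∈ Finset.range (S.domOf t), S.Pcond t s k j = 1
  Punary_sum : ∀ t : S.V, S.isVnode t → (¬ ∃ s, S.vparent s t) →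
    ∑ k ∈ Finset.range (S.domOf t), S.Punary t k = 1

/-- Message passing, with explicit fuel (the fuel never runs out thanks to `rank_lt`):
`msgAux S y n t s j` is the message `μ_{t→s;j}` (`s = none` denotes the fictitious root). -/
def msgAux (S : SPGM Xvar Zvar Xdom Zdom) (y : (Xvar ⊕ Zvar) → Option ℕ) :
    ℕ → S.V → Option S.V → ℕ → ℝ
  | 0, _, _, _ => 1
  | n + 1, t, s, j =>
    match S.kind t with
    | SPGMKind.vnode x =>
        ∑ k ∈ Finset.range (Xdom x),
          (match s with
            | some s' => S.Pcond t s' k j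
            | none => S.Punary t k) *
            Indicator y (Sum.inl x) k *
            (match S.children t with
              | [] => (1 : ℝ)
              | c :: _ => msgAux S y n c (some t) k)
    | SPGMKind.prod => ((S.children t).map fun c => msgAux S y n c s j).prod
    | SPGMKind.sumObs z =>
        ∑ k ∈ Finset.range (S.children t).length,
          Indicator y (Sum.inr z) k * S.Q t k * msgAux S y n ((S.children t).getD k t) s j
    | SPGMKind.sumUnobs =>
        ∑ k ∈ Finset.range (S.children t).length,
          S.W t k * msgAux S y n ((S.children t).getD k t) s j

/-- The message `μ_{t→s;j}` sent by node `t` under partial assignment `y`. -/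
def msg (S : SPGM Xvar Zvar Xdom Zdom) (y : (Xvar ⊕ Zvar) → Option ℕ)
    (t : S.V) (s : Option S.V) (j : ℕ) : ℝ :=
  msgAux S y (S.rank t + 1) t s j

/-- Evaluation of the SPGM at the partial assignment `y` (value of the root message). -/
def eval (S : SPGM Xvar Zvar Xdom Zdom) (y : (Xvar ⊕ Zvar) → Option ℕ) : ℝ :=
  S.msg y S.root none 0

end SPGM

/-- A (decomposable) sum-product network over variables `Var` with domain sizes `dom`:
indicator leaves, products, and weighted sums, with children indexed by `Fin n`. -/
inductive SPN (Var : Type) (dom : Var → ℕ) : Type where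
  | leaf (v : Var) (i : ℕ) : SPN Var dom
  | prod (n : ℕ) (c : Fin n → SPN Var dom) : SPN Var dom
  | sum (n : ℕ) (w : Fin n → ℝ) (c : Fin n → SPN Var dom) : SPN Var dom

namespace SPN

variable {Var : Type} {dom : Var → ℕ}

/-- The scope of an SPN. -/
def scope : SPN Var dom → Set Var
  | .leaf v _ => {v}
  | .prod _ c => ⋃ k, (c k).scope
  | .sum _ _ c => ⋃ k, (c k).scope

/-- Validity (decomposability): leaves use in-domain values, products have at least one
child and pairwise disjoint child scopes, sums have at least one child, nonnegative
weights and a common child scope. -/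
def Valid : SPN Var dom → Prop
  | .leaf v i => i < dom v
  | .prod n c => 0 < n ∧ (∀ k, (c k).Valid) ∧
      ∀ k k', k ≠ k' → Disjoint ((c k).scope) ((c k').scope)
  | .sum n w c => 0 < n ∧ (∀ k, 0 ≤ w k) ∧ (∀ k, (c k).Valid) ∧
      ∀ k k', (c k).scope = (c k').scope

/-- Evaluation of an SPN at a partial assignment `y`. -/
def eval (y : Var → Option ℕ) : SPN Var dom → ℝ
  | .leaf v i => Indicator y v i
  | .prod n c => ∏ k : Fin n, (c k).eval y
  | .sum n w c => ∑ k : Fin n, w k * (c k).eval y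

end SPN

section Aux

variable {Xvar Zvar : Type} {Xdom : Xvar → ℕ} {Zdom : Zvar → ℕ}

lemma SPGM.getD_mem_children (S : SPGM Xvar Zvar Xdom Zdom) (t : S.V) {k : ℕ}
    (hk : k < (S.children t).length) : (S.children t).getD k t ∈ S.children t := by
  rw [List.getD_eq_getElem _ _ hk]
  exact List.getElem_mem _

lemma SPGM.msgAux_stable (S : SPGM Xvar Zvar Xdom Zdom) (y : (Xvar ⊕ Zvar) → Option ℕ) :
    ∀ (n m : ℕ) (t : S.V) (s : Option S.V) (j : ℕ), S.rank t < n → S.rank t < m →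
      SPGM.msgAux S y n t s j = SPGM.msgAux S y m t s j := by
  intro n
  induction n with
  | zero => intro m t s j hn _; exact absurd hn (Nat.not_lt_zero _)
  | succ n ih =>
    intro m t s j hn hm
    obtain ⟨m, rfl⟩ : ∃ m', m = m' + 1 := ⟨m - 1, by omega⟩
    have hrec : ∀ c ∈ S.children t, ∀ (s' : Option S.V) (j' : ℕ),
        SPGM.msgAux S y n c s' j' = SPGM.msgAux S y m c s' j' := by
      intro c hc s' j'
      have := S.rank_lt t c hc
      exact ih m c s' j' (by omega) (by omega)
    rcases hk : S.kind t with x | _ | z | _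
    · simp only [SPGM.msgAux, hk]
      rcases hcl : S.children t with _ | ⟨c, rest⟩
      · rfl
      · refine Finset.sum_congr rfl fun k _ => ?_
        simp only [hrec c (hcl ▸ (List.mem_cons_self : c ∈ c :: rest)) (some t) k]
    · simp only [SPGM.msgAux, hk]
      exact congrArg List.prod (List.map_congr_left fun c hc => hrec c hc s j)
    · simp only [SPGM.msgAux, hk]
      refine Finset.sum_congr rfl fun k hkmem => ?_
      rw [hrec _ (S.getD_mem_children t (Finset.mem_range.mp hkmem)) s j]
    · simp only [SPGM.msgAux, hk]
      refine Finset.sum_congr rfl fun k hkmem => ?_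
      rw [hrec _ (S.getD_mem_children t (Finset.mem_range.mp hkmem)) s j]

lemma SPGM.msgAux_eq_msg (S : SPGM Xvar Zvar Xdom Zdom) (y : (Xvar ⊕ Zvar) → Option ℕ)
    {n : ℕ} {t : S.V} (hn : S.rank t < n) (s : Option S.V) (j : ℕ) :
    SPGM.msgAux S y n t s j = S.msg y t s j :=
  S.msgAux_stable y n (S.rank t + 1) t s j hn (Nat.lt_succ_self _)

lemma SPGM.mem_scope_iff (S : SPGM Xvar Zvar Xdom Zdom) (t : S.V) (v : Xvar ⊕ Zvar) :
    v ∈ S.scope t ↔ S.label t = some v ∨ ∃ c ∈ S.children t, v ∈ S.scope c := by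
  constructor
  · rintro ⟨u, hr, hl⟩
    rcases Relation.ReflTransGen.cases_head hr with rfl | ⟨c, hc, hr'⟩
    · exact Or.inl hl
    · exact Or.inr ⟨c, hc, u, hr', hl⟩
  · rintro (hl | ⟨c, hc, u, hr, hl⟩)
    · exact ⟨t, Relation.ReflTransGen.refl, hl⟩
    · exact ⟨u, Relation.ReflTransGen.head hc hr, hl⟩

lemma iUnion_fin_two {α : Type*} (f : Fin 2 → Set α) : (⋃ i, f i) = f 0 ∪ f 1 := by
  ext v; simp [Set.mem_iUnion, Fin.exists_fin_two]

lemma SPN.scope_leaf {Var : Type} {dom : Var → ℕ} (v : Var) (i : ℕ) :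
    (SPN.leaf v i : SPN Var dom).scope = {v} := rfl

lemma SPN.prodTwo_valid {Var : Type} {dom : Var → ℕ} {a b : SPN Var dom}
    (ha : a.Valid) (hb : b.Valid) (hd : Disjoint a.scope b.scope) :
    (SPN.prod 2 ![a, b]).Valid := by
  refine ⟨two_pos, fun k => ?_, fun k k' hkk' => ?_⟩
  · fin_cases k <;> simpa
  · fin_cases k <;> fin_cases k'
    · exact absurd rfl hkk'
    · simpa using hd
    · simpa using hd.symm
    · exact absurd rfl hkk'

lemma SPN.prodTwo_scope {Var : Type} {dom : Var → ℕ} (a b : SPN Var dom) :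
    (SPN.prod 2 ![a, b]).scope = a.scope ∪ b.scope := by
  show (⋃ k : Fin 2, (![a, b] k).scope) = _
  rw [iUnion_fin_two]
  simp

lemma SPN.prodTwo_eval {Var : Type} {dom : Var → ℕ} (a b : SPN Var dom)
    (y : Var → Option ℕ) :
    (SPN.prod 2 ![a, b]).eval y = a.eval y * b.eval y := by
  show (∏ k : Fin 2, (![a, b] k).eval y) = _
  rw [Fin.prod_univ_two]
  simp

lemma list_prod_map_eq_fin_prod {α : Type*} (l : List α) (f : α → ℝ) :
    (l.map f).prod = ∏ k : Fin l.length, f (l.get k) := by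
  conv_lhs => rw [← List.ofFn_get l]
  rw [List.map_ofFn, List.prod_ofFn]
  rfl

end Aux

/-- inductive step of the encoding of SPGM messages as SPNs.
Let `S` be a valid SPGM, `t` a node and `s` either a Vparent of `t` together with a state
`j` in the domain of its variable, or the fictitious root (`s = none`, `j = 0`) when `t`
has no Vparent.  If every message sent by a child of `t` occurring in the computation of
the messages of `t` (the messages `μ_{c→s;j}` for the children `c` when `t` is a sum or
product node, and the messages `μ_{c→t;k}` for `k` in the domain of `X_t` when `t` is a
Vnode) is, as a function of partial assignments, the evaluation function of some
decomposable SPN over the scope of `c`, then the message `μ_{t→s;j}` is the evaluation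
function of some decomposable SPN over `X^t ∪ Z^t`, the scope of `t`. -/
theorem spgm_message_is_spn {Xvar Zvar : Type} {Xdom : Xvar → ℕ} {Zdom : Zvar → ℕ}
    (S : SPGM Xvar Zvar Xdom Zdom) (hS : S.Valid) (hN : S.Normalized)
    (t : S.V) (s : Option S.V) (j : ℕ)
    (hsj : match s with
      | some s' => S.vparent s' t ∧ j < S.domOf s'
      | none => (¬ ∃ s' : S.V, S.vparent s' t) ∧ j = 0)
    (hchild : ∀ c ∈ S.children t,
      (¬ S.isVnode t →
        ∃ N : SPN (Xvar ⊕ Zvar) (Sum.elim Xdom Zdom),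
          N.Valid ∧ N.scope = S.scope c ∧
            ∀ y : (Xvar ⊕ Zvar) → Option ℕ, N.eval y = S.msg y c s j) ∧
      (S.isVnode t → ∀ k < S.domOf t,
        ∃ N : SPN (Xvar ⊕ Zvar) (Sum.elim Xdom Zdom),
          N.Valid ∧ N.scope = S.scope c ∧
            ∀ y : (Xvar ⊕ Zvar) → Option ℕ, N.eval y = S.msg y c (some t) k)) :
    ∃ N : SPN (Xvar ⊕ Zvar) (Sum.elim Xdom Zdom),
      N.Valid ∧ N.scope = S.scope t ∧
        ∀ y : (Xvar ⊕ Zvar) → Option ℕ, N.eval y = S.msg y t s j := by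
  rcases hk : S.kind t with x | _ | z | _
  -- Vnode case
  · have hvt : S.isVnode t := ⟨x, hk⟩
    have hdom : S.domOf t = Xdom x := by simp [SPGM.domOf, hk]
    have hxpos : 0 < Xdom x := hS.xdom_pos x
    have hlab : S.label t = some (Sum.inl x) := by simp [SPGM.label, hk]
    have hwnn : ∀ k, 0 ≤ (match s with
        | some s' => S.Pcond t s' k j | none => S.Punary t k) := by
      intro k
      rcases s with _ | s'
      · exact hS.Punary_nonneg t k
      · exact hS.Pcond_nonneg t s' k j
    rcases hcl : S.children t with _ | ⟨c, rest⟩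
    · -- Vnode leaf
      refine ⟨SPN.sum (Xdom x)
        (fun k => match s with | some s' => S.Pcond t s' k j | none => S.Punary t k)
        (fun k => SPN.leaf (Sum.inl x) k), ⟨hxpos, fun k => hwnn k, fun k => ?_, fun k k' => rfl⟩,
        ?_, ?_⟩
      · show (k : ℕ) < Sum.elim Xdom Zdom (Sum.inl x)
        simpa using k.2
      · show (⋃ k : Fin (Xdom x), (SPN.leaf (Sum.inl x) (k : ℕ) :
            SPN (Xvar ⊕ Zvar) (Sum.elim Xdom Zdom)).scope) = S.scope t
        ext v
        rw [Set.mem_iUnion, S.mem_scope_iff, hlab, hcl]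
        simp only [SPN.scope_leaf, Set.mem_singleton_iff, List.not_mem_nil, false_and,
          exists_false, or_false, Option.some.injEq]
        constructor
        · rintro ⟨k, rfl⟩; rfl
        · rintro rfl; exact ⟨⟨0, hxpos⟩, rfl⟩
      · intro y
        rw [SPGM.msg]
        simp only [SPGM.msgAux, hk, hcl, mul_one]
        exact Fin.sum_univ_eq_sum_range
          (fun k => (match s with | some s' => S.Pcond t s' k j | none => S.Punary t k) *
            Indicator y (Sum.inl x) k) (Xdom x)
    · -- Vnode with a child
      have hcmem : c ∈ S.children t := hcl ▸ (List.mem_cons_self : c ∈ c :: rest)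
      have hx_not : Sum.inl x ∉ S.scope c := hS.vnode_scope t x c hk hcmem
      have hrest : rest = [] := by
        have h1 := hS.vnode_child t hvt
        rw [hcl] at h1
        simp only [List.length_cons] at h1
        exact List.length_eq_zero_iff.mp (by omega)
      subst hrest
      choose N hNv hNs hNe using fun k : Fin (Xdom x) =>
        (hchild c hcmem).2 hvt k (by rw [hdom]; exact k.2)
      haveI : Nonempty (Fin (Xdom x)) := ⟨⟨0, hxpos⟩⟩
      refine ⟨SPN.sum (Xdom x)
        (fun k => match s with | some s' => S.Pcond t s' k j | none => S.Punary t k)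
        (fun k => SPN.prod 2 ![SPN.leaf (Sum.inl x) k, N k]),
        ⟨hxpos, fun k => hwnn k, fun k => ?_, fun k k' => ?_⟩, ?_, ?_⟩
      · exact SPN.prodTwo_valid
          (show ((k : ℕ) : ℕ) < Sum.elim Xdom Zdom (Sum.inl x) from k.2) (hNv k)
          (by rw [hNs k, SPN.scope_leaf]
              exact Set.disjoint_singleton_left.mpr hx_not)
      · rw [SPN.prodTwo_scope, SPN.prodTwo_scope, hNs k, hNs k', SPN.scope_leaf, SPN.scope_leaf]
      · show (⋃ k : Fin (Xdom x),
            (SPN.prod 2 ![SPN.leaf (Sum.inl x) (k : ℕ), N k]).scope) = S.scope t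
        have hus : ∀ k : Fin (Xdom x), (SPN.prod 2 ![SPN.leaf (Sum.inl x) (k : ℕ), N k]).scope
            = {Sum.inl x} ∪ S.scope c := by
          intro k
          rw [SPN.prodTwo_scope, hNs k, SPN.scope_leaf]
        simp only [hus]
        rw [Set.iUnion_const]
        ext v
        rw [Set.mem_union, S.mem_scope_iff t v, hlab, hcl]
        simp [eq_comm]
      · intro y
        rw [SPGM.msg]
        simp only [SPGM.msgAux, hk, hcl]
        simp only [SPN.eval, Fin.prod_univ_two, Matrix.cons_val_zero, Matrix.cons_val_one,
          Matrix.head_cons, hNe]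
        rw [← Fin.sum_univ_eq_sum_range (fun k =>
          (match s with | some s' => S.Pcond t s' k j | none => S.Punary t k) *
            Indicator y (Sum.inl x) k * SPGM.msgAux S y (S.rank t) c (some t) k) (Xdom x)]
        refine Finset.sum_congr rfl fun k _ => ?_
        rw [SPGM.msgAux_eq_msg S y (S.rank_lt t c hcmem), ← mul_assoc]
  -- Product case
  · have hvt : ¬ S.isVnode t := by rintro ⟨x', hx'⟩; rw [hk] at hx'; cases hx'
    have hlab : S.label t = none := by simp [SPGM.label, hk]
    have hne : S.children t ≠ [] := hS.prod_child t hk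
    have hlen : 0 < (S.children t).length := List.length_pos_iff.mpr hne
    choose N hNv hNs hNe using fun k : Fin (S.children t).length =>
      (hchild _ (List.getElem_mem k.2)).1 hvt
    have hpw := (List.pairwise_iff_getElem).mp (hS.prod_scope t hk)
    refine ⟨SPN.prod _ N, ⟨hlen, hNv, fun k k' hkk' => ?_⟩, ?_, ?_⟩
    · rw [hNs k, hNs k']
      rcases lt_or_gt_of_ne (fun h : (k : ℕ) = (k' : ℕ) => hkk' (Fin.ext h)) with h | h
      · exact hpw k k' k.2 k'.2 h
      · exact (hpw k' k k'.2 k.2 h).symm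
    · ext v
      simp only [SPN.scope, Set.mem_iUnion, hNs]
      rw [S.mem_scope_iff t v, hlab]
      constructor
      · rintro ⟨k, hv⟩
        exact Or.inr ⟨_, List.getElem_mem k.2, hv⟩
      · rintro (h | ⟨c, hc, hv⟩)
        · exact nomatch h
        · obtain ⟨i, hi, rfl⟩ := List.mem_iff_getElem.mp hc
          exact ⟨⟨i, hi⟩, hv⟩
    · intro y
      rw [SPGM.msg]
      simp only [SPGM.msgAux, hk]
      rw [list_prod_map_eq_fin_prod]
      simp only [SPN.eval, hNe]
      refine Finset.prod_congr rfl fun k _ => ?_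
      exact (SPGM.msgAux_eq_msg S y (S.rank_lt t _ (List.getElem_mem k.2)) s j).symm
  -- Observed sum case
  · have hvt : ¬ S.isVnode t := by rintro ⟨x', hx'⟩; rw [hk] at hx'; cases hx'
    have hsum : S.isSum t := Or.inl ⟨z, hk⟩
    have hlab : S.label t = some (Sum.inr z) := by simp [SPGM.label, hk]
    have hne : S.children t ≠ [] := hS.sum_child t hsum
    have hlen : 0 < (S.children t).length := List.length_pos_iff.mpr hne
    have hcard := hS.sumObs_card t z hk
    choose N hNv hNs hNe using fun k : Fin (S.children t).length =>
      (hchild _ (List.getElem_mem k.2)).1 hvt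
    haveI : Nonempty (Fin (S.children t).length) := ⟨⟨0, hlen⟩⟩
    refine ⟨SPN.sum _ (fun k => S.Q t k)
        (fun k => SPN.prod 2 ![SPN.leaf (Sum.inr z) k, N k]),
      ⟨hlen, fun k => hS.Q_nonneg t k, fun k => ?_, fun k k' => ?_⟩, ?_, ?_⟩
    · exact SPN.prodTwo_valid
        (show ((k : ℕ) : ℕ) < Sum.elim Xdom Zdom (Sum.inr z) from lt_of_lt_of_eq k.2 hcard)
        (hNv k)
        (by rw [hNs k, SPN.scope_leaf]
            exact Set.disjoint_singleton_left.mpr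
              (hS.sumObs_scope t z _ hk (List.getElem_mem k.2)))
    · rw [SPN.prodTwo_scope, SPN.prodTwo_scope, hNs k, hNs k', SPN.scope_leaf, SPN.scope_leaf,
        hS.sum_scope t hsum _ (List.getElem_mem k.2) _ (List.getElem_mem k'.2)]
    · show (⋃ k : Fin (S.children t).length,
          (SPN.prod 2 ![SPN.leaf (Sum.inr z) (k : ℕ), N k]).scope) = S.scope t
      ext v
      simp only [SPN.prodTwo_scope, hNs, SPN.scope_leaf, Set.mem_iUnion, Set.mem_union,
        Set.mem_singleton_iff]
      rw [S.mem_scope_iff t v, hlab]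
      constructor
      · rintro ⟨k, rfl | hv⟩
        · exact Or.inl rfl
        · exact Or.inr ⟨_, List.getElem_mem k.2, hv⟩
      · rintro (h | ⟨c, hc, hv⟩)
        · exact ⟨Classical.arbitrary _, Or.inl (Option.some_inj.mp h).symm⟩
        · obtain ⟨i, hi, rfl⟩ := List.mem_iff_getElem.mp hc
          exact ⟨⟨i, hi⟩, Or.inr hv⟩
    · intro y
      rw [SPGM.msg]
      simp only [SPGM.msgAux, hk]
      simp only [SPN.eval, Fin.prod_univ_two, Matrix.cons_val_zero, Matrix.cons_val_one,
        Matrix.head_cons, hNe]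
      rw [← Fin.sum_univ_eq_sum_range (fun k =>
        Indicator y (Sum.inr z) k * S.Q t k *
          SPGM.msgAux S y (S.rank t) ((S.children t).getD k t) s j)]
      refine Finset.sum_congr rfl fun k _ => ?_
      rw [List.getD_eq_getElem _ _ k.2,
        SPGM.msgAux_eq_msg S y (S.rank_lt t _ (List.getElem_mem k.2))]
      ring
  -- Unobserved sum case
  · have hvt : ¬ S.isVnode t := by rintro ⟨x', hx'⟩; rw [hk] at hx'; cases hx'
    have hsum : S.isSum t := Or.inr hk
    have hlab : S.label t = none := by simp [SPGM.label, hk]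
    have hne : S.children t ≠ [] := hS.sum_child t hsum
    have hlen : 0 < (S.children t).length := List.length_pos_iff.mpr hne
    choose N hNv hNs hNe using fun k : Fin (S.children t).length =>
      (hchild _ (List.getElem_mem k.2)).1 hvt
    refine ⟨SPN.sum _ (fun k => S.W t k) N,
      ⟨hlen, fun k => hS.W_nonneg t k, hNv, fun k k' => ?_⟩, ?_, ?_⟩
    · rw [hNs k, hNs k']
      exact hS.sum_scope t hsum _ (List.getElem_mem k.2) _ (List.getElem_mem k'.2)
    · ext v
      simp only [SPN.scope, Set.mem_iUnion, hNs]
      rw [S.mem_scope_iff t v, hlab]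
      constructor
      · rintro ⟨k, hv⟩
        exact Or.inr ⟨_, List.getElem_mem k.2, hv⟩
      · rintro (h | ⟨c, hc, hv⟩)
        · exact nomatch h
        · obtain ⟨i, hi, rfl⟩ := List.mem_iff_getElem.mp hc
          exact ⟨⟨i, hi⟩, hv⟩
    · intro y
      rw [SPGM.msg]
      simp only [SPGM.msgAux, hk]
      simp only [SPN.eval, hNe]
      rw [← Fin.sum_univ_eq_sum_range (fun k =>
        S.W t k * SPGM.msgAux S y (S.rank t) ((S.children t).getD k t) s j)]
      refine Finset.sum_congr rfl fun k _ => ?_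
      rw [List.getD_eq_getElem _ _ k.2,
        SPGM.msgAux_eq_msg S y (S.rank_lt t _ (List.getElem_mem k.2))]
end
end

section
/- Let S be a valid SPGM and t a node of S such that every message sent by every child c of t satisfies, for every partial assignment, μ_{c→s;j} = ∑_{τ ∈ T(S_c)} μ_{root(τ)→s;j}, where S_c is the sub-SPGM rooted at c, T(S_c) is its set of subtrees, and the summand is the corresponding message computed within the subtree τ. Then every message sent by t satisfies the same identity with T(S_t) in place of T(S_c), where S_t is the sub-SPGM rooted at t. -/
attribute [local instance] Classical.propDecidable

noncomputable section

namespace SPGM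

variable {Xvar Zvar : Type} {Xdom : Xvar → ℕ} {Zdom : Zvar → ℕ}

/-- Edge of the subtree determined by the choice function `σ`: a Vnode or product node keeps
all its child edges, a sum node `t` keeps only the edge to its `σ t`-th child. -/
def subEdge (S : SPGM Xvar Zvar Xdom Zdom) (σ : S.V → ℕ) (t c : S.V) : Prop :=
  (¬ S.isSum t ∧ c ∈ S.children t) ∨ (S.isSum t ∧ c = (S.children t).getD (σ t) t)

/-- `KeepAt S σ r v`: node `v` is kept in the subtree with root `r` determined by the
choice function `σ`. -/
inductive KeepAt (S : SPGM Xvar Zvar Xdom Zdom) (σ : S.V → ℕ) : S.V → S.V → Prop where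
  | refl (r : S.V) : KeepAt S σ r r
  | step {r t c : S.V} : KeepAt S σ r t → S.subEdge σ t c → KeepAt S σ r c

/-- Node `v` is kept in the subtree of `S` (rooted at the root of `S`) determined by `σ`. -/
def Keep (S : SPGM Xvar Zvar Xdom Zdom) (σ : S.V → ℕ) (v : S.V) : Prop :=
  KeepAt S σ S.root v

/-- The set of subtrees of the sub-SPGM rooted at `r`, represented by their canonical
choice functions: `σ t` is a valid child index at every sum node and is `0` at every node
that is not a kept sum node.  Distinct canonical choice functions correspond exactly to
distinct subtrees. -/
def subtreesAt (S : SPGM Xvar Zvar Xdom Zdom) (r : S.V) : Set (S.V → ℕ) :=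
  {σ | (∀ t : S.V, S.isSum t → σ t < (S.children t).length) ∧
       (∀ t : S.V, ¬ (KeepAt S σ r t ∧ S.isSum t) → σ t = 0)}

/-- The set `T(S)` of subtrees of `S`, represented by canonical choice functions. -/
def subtrees (S : SPGM Xvar Zvar Xdom Zdom) : Set (S.V → ℕ) :=
  S.subtreesAt S.root

/-- Message passing within the subtree determined by `σ` (with fuel, as in `msgAux`):
at a sum node only the chosen child is used. -/
def msgSubAux (S : SPGM Xvar Zvar Xdom Zdom) (σ : S.V → ℕ)
    (y : (Xvar ⊕ Zvar) → Option ℕ) : ℕ → S.V → Option S.V → ℕ → ℝ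
  | 0, _, _, _ => 1
  | n + 1, t, s, j =>
    match S.kind t with
    | SPGMKind.vnode x =>
        ∑ k ∈ Finset.range (Xdom x),
          (match s with
            | some s' => S.Pcond t s' k j
            | none => S.Punary t k) *
            Indicator y (Sum.inl x) k *
            (match S.children t with
              | [] => (1 : ℝ)
              | c :: _ => msgSubAux S σ y n c (some t) k)
    | SPGMKind.prod => ((S.children t).map fun c => msgSubAux S σ y n c s j).prod
    | SPGMKind.sumObs z =>
        Indicator y (Sum.inr z) (σ t) * S.Q t (σ t) *
          msgSubAux S σ y n ((S.children t).getD (σ t) t) s j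
    | SPGMKind.sumUnobs =>
        S.W t (σ t) * msgSubAux S σ y n ((S.children t).getD (σ t) t) s j

/-- The message `μ_{t→s;j}` computed within the subtree determined by `σ`. -/
def msgSub (S : SPGM Xvar Zvar Xdom Zdom) (σ : S.V → ℕ) (y : (Xvar ⊕ Zvar) → Option ℕ)
    (t : S.V) (s : Option S.V) (j : ℕ) : ℝ :=
  msgSubAux S σ y (S.rank t + 1) t s j

/-- Evaluation of the subtree `τ` of `S` determined by `σ` at the partial assignment `y`. -/
def evalSub (S : SPGM Xvar Zvar Xdom Zdom) (σ : S.V → ℕ)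
    (y : (Xvar ⊕ Zvar) → Option ℕ) : ℝ :=
  S.msgSub σ y S.root none 0

/-- An edge of `S` kept in the subtree determined by `σ`. -/
def keptEdge (S : SPGM Xvar Zvar Xdom Zdom) (σ : S.V → ℕ) (t c : S.V) : Prop :=
  S.Keep σ t ∧ S.subEdge σ t c

/-- The underlying undirected (simple) graph of the subtree determined by `σ`:
vertices are the kept nodes, adjacency is the (undirected) kept-edge relation. -/
def subtreeGraph (S : SPGM Xvar Zvar Xdom Zdom) (σ : S.V → ℕ) : SimpleGraph S.V where
  Adj a b := a ≠ b ∧ S.Keep σ a ∧ S.Keep σ b ∧ (S.keptEdge σ a b ∨ S.keptEdge σ b a)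
  symm := by
    constructor
    intro a b h
    exact ⟨Ne.symm h.1, h.2.2.1, h.2.1, h.2.2.2.symm⟩
  loopless := by
    constructor
    intro a h
    exact h.1 rfl

/-- The scope of the subtree determined by `σ`: all variables labeling kept nodes. -/
def subtreeScope (S : SPGM Xvar Zvar Xdom Zdom) (σ : S.V → ℕ) : Set (Xvar ⊕ Zvar) :=
  {v | ∃ t : S.V, S.Keep σ t ∧ S.label t = some v}

/-- The coefficient `λ_τ` of the subtree determined by `σ`: the product of the weights of
all kept sum nodes. -/
def lam (S : SPGM Xvar Zvar Xdom Zdom) (σ : S.V → ℕ) : ℝ :=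
  (∏ t : S.V, if S.Keep σ t ∧ S.isSumObs t then S.Q t (σ t) else 1) *
    (∏ t : S.V, if S.Keep σ t ∧ S.isSumUnobs t then S.W t (σ t) else 1)

/-- The product of the indicator variables in `z_τ` (one for each kept observed sum node),
evaluated relative to the partial assignment `y`. -/
def zInd (S : SPGM Xvar Zvar Xdom Zdom) (σ : S.V → ℕ)
    (y : (Xvar ⊕ Zvar) → Option ℕ) : ℝ :=
  ∏ t : S.V,
    match S.kind t with
    | SPGMKind.sumObs z => if S.Keep σ t then Indicator y (Sum.inr z) (σ t) else 1
    | _ => 1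

/-- Value of a total assignment `x` of the X-variables at a Vnode (`0` at other nodes). -/
def xval (S : SPGM Xvar Zvar Xdom Zdom) (x : Xvar → ℕ) (t : S.V) : ℕ :=
  match S.kind t with
  | SPGMKind.vnode xv => x xv
  | _ => 0

/-- A directed path along edges of the subtree determined by `σ` with no intermediate
Vnode. -/
inductive ReachNoVSub (S : SPGM Xvar Zvar Xdom Zdom) (σ : S.V → ℕ) : S.V → S.V → Prop where
  | base {s c : S.V} : S.subEdge σ s c → ReachNoVSub S σ s c
  | step {s t c : S.V} : ReachNoVSub S σ s t → ¬ S.isVnode t → S.subEdge σ t c →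
      ReachNoVSub S σ s c

/-- `s` is a Vparent of `t` within the subtree determined by `σ`. -/
def vparentSub (S : SPGM Xvar Zvar Xdom Zdom) (σ : S.V → ℕ) (s t : S.V) : Prop :=
  S.isVnode s ∧ ReachNoVSub S σ s t

/-- The tree graphical model distribution `P_τ` of the subtree determined by `σ`, as a
function of a total assignment `x` of the X-variables: the product of the unary tables of
the kept Vnodes without Vparent in the subtree and of the conditional tables of all
Vparent-child Vnode pairs of the subtree. -/
def Ptau (S : SPGM Xvar Zvar Xdom Zdom) (σ : S.V → ℕ) (x : Xvar → ℕ) : ℝ :=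
  (∏ t : S.V,
      if S.Keep σ t ∧ S.isVnode t ∧ ¬ (∃ s, S.Keep σ s ∧ S.vparentSub σ s t) then
        S.Punary t (S.xval x t)
      else 1) *
    ∏ p : S.V × S.V,
      if S.Keep σ p.1 ∧ S.Keep σ p.2 ∧ S.isVnode p.2 ∧ S.vparentSub σ p.1 p.2 then
        S.Pcond p.2 p.1 (S.xval x p.2) (S.xval x p.1)
      else 1

/-- The number of edges of the DAG underlying `S`. -/
def edgeCount (S : SPGM Xvar Zvar Xdom Zdom) : ℕ :=
  ∑ v : S.V, (S.children v).length

end SPGM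

namespace SPGM

variable {Xvar Zvar : Type} {Xdom : Xvar → ℕ} {Zdom : Zvar → ℕ}
variable {S : SPGM Xvar Zvar Xdom Zdom}

/-- All sum nodes have an in-range choice. -/
def InRange (S : SPGM Xvar Zvar Xdom Zdom) (σ : S.V → ℕ) : Prop :=
  ∀ u, S.isSum u → σ u < (S.children u).length

lemma reach_rank {a b : S.V} (h : S.Reach a b) : S.rank b ≤ S.rank a := by
  induction h with
  | refl => exact le_rfl
  | tail h1 h2 ih => exact le_trans (le_of_lt (S.rank_lt _ _ h2)) ih

lemma scope_mono {a b : S.V} (h : S.Reach a b) : S.scope b ⊆ S.scope a := by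
  rintro v ⟨u, hu, hl⟩
  exact ⟨u, h.trans hu, hl⟩

lemma not_isSum_of_vnode {t : S.V} {x : Xvar} (hk : S.kind t = SPGMKind.vnode x) :
    ¬ S.isSum t := by
  rintro (⟨z, hz⟩ | hz)
  · rw [hk] at hz; cases hz
  · have h2 : S.kind t = SPGMKind.sumUnobs := hz
    rw [hk] at h2; cases h2

lemma not_isSum_of_prod {t : S.V} (hk : S.kind t = SPGMKind.prod) :
    ¬ S.isSum t := by
  rintro (⟨z, hz⟩ | hz)
  · rw [hk] at hz; cases hz
  · have h2 : S.kind t = SPGMKind.sumUnobs := hz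
    rw [hk] at h2; cases h2

lemma children_ne_nil (hS : S.Valid) (u : S.V) (h : ¬ S.isVnode u) :
    S.children u ≠ [] := by
  cases hk : S.kind u with
  | vnode x => exact absurd ⟨x, hk⟩ h
  | prod => exact hS.prod_child u hk
  | sumObs z => exact hS.sum_child u (Or.inl ⟨z, hk⟩)
  | sumUnobs => exact hS.sum_child u (Or.inr hk)

lemma exists_reach_vnode (hS : S.Valid) :
    ∀ (n : ℕ) (u : S.V), S.rank u ≤ n → ∃ v, S.Reach u v ∧ S.isVnode v := by
  intro n
  induction n with
  | zero =>
    intro u hu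
    by_cases h : S.isVnode u
    · exact ⟨u, Relation.ReflTransGen.refl, h⟩
    · obtain ⟨c, hc⟩ := List.exists_mem_of_ne_nil _ (children_ne_nil hS u h)
      exact absurd (S.rank_lt u c hc) (by omega)
  | succ n ih =>
    intro u hu
    by_cases h : S.isVnode u
    · exact ⟨u, Relation.ReflTransGen.refl, h⟩
    · obtain ⟨c, hc⟩ := List.exists_mem_of_ne_nil _ (children_ne_nil hS u h)
      obtain ⟨v, hv1, hv2⟩ := ih c (by have := S.rank_lt u c hc; omega)
      exact ⟨v, Relation.ReflTransGen.head hc hv1, hv2⟩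

lemma scope_nonempty (hS : S.Valid) (u : S.V) : (S.scope u).Nonempty := by
  obtain ⟨v, hv, x, hx⟩ := exists_reach_vnode hS (S.rank u) u le_rfl
  exact ⟨Sum.inl x, v, hv, by simp [label, hx]⟩

lemma not_reach_both (hS : S.Valid) {a b u : S.V} (hd : Disjoint (S.scope a) (S.scope b))
    (ha : S.Reach a u) (hb : S.Reach b u) : False := by
  obtain ⟨v, hv⟩ := scope_nonempty hS u
  exact Set.disjoint_left.mp hd (scope_mono ha hv) (scope_mono hb hv)

lemma subEdge_mem {σ : S.V → ℕ} (Hσ : S.InRange σ) {a b : S.V}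
    (h : S.subEdge σ a b) : b ∈ S.children a := by
  rcases h with ⟨_, h⟩ | ⟨hs, h⟩
  · exact h
  · subst h
    rw [List.getD_eq_getElem _ _ (Hσ a hs)]
    exact List.getElem_mem _

lemma keepAt_reach {σ : S.V → ℕ} (Hσ : S.InRange σ) {r u : S.V}
    (h : S.KeepAt σ r u) : S.Reach r u := by
  induction h with
  | refl => exact Relation.ReflTransGen.refl
  | step h1 h2 ih => exact ih.tail (subEdge_mem Hσ h2)

lemma keepAt_of_edge {σ : S.V → ℕ} {r b u : S.V} (he : S.subEdge σ r b)
    (h : S.KeepAt σ b u) : S.KeepAt σ r u := by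
  induction h with
  | refl => exact KeepAt.step (KeepAt.refl r) he
  | step h1 h2 ih => exact ih.step h2

lemma keepAt_cases {σ : S.V → ℕ} {r u : S.V} (h : S.KeepAt σ r u) :
    u = r ∨ ∃ b, S.subEdge σ r b ∧ S.KeepAt σ b u := by
  induction h with
  | refl => exact Or.inl rfl
  | @step t c h1 h2 ih =>
    rcases ih with rfl | ⟨b, hb1, hb2⟩
    · exact Or.inr ⟨c, h2, KeepAt.refl c⟩
    · exact Or.inr ⟨b, hb1, hb2.step h2⟩

lemma keepAt_congr {σ σ' : S.V → ℕ} (Hσ : S.InRange σ) {r u : S.V}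
    (hagree : ∀ u, S.Reach r u → S.isSum u → σ u = σ' u)
    (h : S.KeepAt σ r u) : S.KeepAt σ' r u := by
  induction h with
  | refl => exact KeepAt.refl r
  | @step t c h1 h2 ih =>
    refine ih.step ?_
    rcases h2 with ⟨hns, hc⟩ | ⟨hs, hc⟩
    · exact Or.inl ⟨hns, hc⟩
    · exact Or.inr ⟨hs, by rw [← hagree t (keepAt_reach Hσ h1) hs]; exact hc⟩

lemma getD_mem_children_s10 {t : S.V} {k : ℕ} (hk : k < (S.children t).length) :
    (S.children t).getD k t ∈ S.children t := by
  rw [List.getD_eq_getElem _ _ hk]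
  exact List.getElem_mem _

lemma msgAux_fuel (y : (Xvar ⊕ Zvar) → Option ℕ) :
    ∀ (n m : ℕ) (t : S.V) (s : Option S.V) (j : ℕ), S.rank t < n → S.rank t < m →
      S.msgAux y n t s j = S.msgAux y m t s j := by
  intro n
  induction n with
  | zero => intro m t s j h; omega
  | succ n ih =>
    intro m t s j hn hm
    obtain ⟨m, rfl⟩ : ∃ m', m = m' + 1 := ⟨m - 1, by omega⟩
    rcases hk : S.kind t with x | _ | z | _ <;> simp only [msgAux, hk]
    · refine Finset.sum_congr rfl fun k _ => ?_
      rcases hc : S.children t with _ | ⟨c, cs⟩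
      · rfl
      · have hr : S.rank c < S.rank t := S.rank_lt t c (by rw [hc]; exact List.mem_cons_self)
        dsimp only
        rw [ih m c (some t) k (by omega) (by omega)]
    · congr 1
      refine List.map_congr_left fun c hc => ?_
      have hr := S.rank_lt t c hc
      exact ih m c s j (by omega) (by omega)
    · refine Finset.sum_congr rfl fun k hk' => ?_
      have hr := S.rank_lt t _ (getD_mem_children_s10 (S := S) (t := t) (Finset.mem_range.mp hk'))
      rw [ih m _ s j (by omega) (by omega)]
    · refine Finset.sum_congr rfl fun k hk' => ?_
      have hr := S.rank_lt t _ (getD_mem_children_s10 (S := S) (t := t) (Finset.mem_range.mp hk'))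
      rw [ih m _ s j (by omega) (by omega)]

lemma msgSubAux_congr (y : (Xvar ⊕ Zvar) → Option ℕ) {σ σ' : S.V → ℕ}
    (Hσ : S.InRange σ) :
    ∀ (n m : ℕ) (t : S.V) (s : Option S.V) (j : ℕ), S.rank t < n → S.rank t < m →
      (∀ u, S.Reach t u → S.isSum u → σ u = σ' u) →
      S.msgSubAux σ y n t s j = S.msgSubAux σ' y m t s j := by
  intro n
  induction n with
  | zero => intro m t s j h; omega
  | succ n ih =>
    intro m t s j hn hm hag
    obtain ⟨m, rfl⟩ : ∃ m', m = m' + 1 := ⟨m - 1, by omega⟩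
    rcases hk : S.kind t with x | _ | z | _ <;> simp only [msgSubAux, hk]
    · refine Finset.sum_congr rfl fun k _ => ?_
      rcases hc : S.children t with _ | ⟨c, cs⟩
      · rfl
      · have hcm : c ∈ S.children t := by rw [hc]; exact List.mem_cons_self
        have hr : S.rank c < S.rank t := S.rank_lt t c hcm
        dsimp only
        rw [ih m c (some t) k (by omega) (by omega)
          (fun u hu => hag u ((Relation.ReflTransGen.single hcm).trans hu))]
    · congr 1
      refine List.map_congr_left fun c hc => ?_
      have hr := S.rank_lt t c hc
      exact ih m c s j (by omega) (by omega)
        (fun u hu => hag u ((Relation.ReflTransGen.single hc).trans hu))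
    · have hst : σ t = σ' t := hag t Relation.ReflTransGen.refl (Or.inl ⟨z, hk⟩)
      have hcm := getD_mem_children_s10 (S := S) (t := t) (Hσ t (Or.inl ⟨z, hk⟩))
      have hr := S.rank_lt t _ hcm
      rw [← hst, ih m _ s j (by omega) (by omega)
        (fun u hu => hag u ((Relation.ReflTransGen.single hcm).trans hu))]
    · have hst : σ t = σ' t := hag t Relation.ReflTransGen.refl (Or.inr hk)
      have hcm := getD_mem_children_s10 (S := S) (t := t) (Hσ t (Or.inr hk))
      have hr := S.rank_lt t _ hcm
      rw [← hst, ih m _ s j (by omega) (by omega)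
        (fun u hu => hag u ((Relation.ReflTransGen.single hcm).trans hu))]

lemma mem_subtreesAt {r : S.V} {σ : S.V → ℕ} :
    σ ∈ S.subtreesAt r ↔ S.InRange σ ∧
      ∀ u : S.V, ¬ (S.KeepAt σ r u ∧ S.isSum u) → σ u = 0 := Iff.rfl

lemma subtreesAt_finite (r : S.V) : (S.subtreesAt r).Finite := by
  apply Set.Finite.subset
    (Set.Finite.pi fun v : S.V => Set.finite_Iio ((S.children v).length + 1))
  intro σ hσ
  rw [Set.mem_pi]
  intro v _
  simp only [Set.mem_Iio]
  by_cases hs : S.isSum v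
  · by_cases hkeep : S.KeepAt σ r v ∧ S.isSum v
    · exact Nat.lt_succ_of_lt (hσ.1 v hs)
    · rw [hσ.2 v hkeep]; omega
  · rw [hσ.2 v (fun h => hs h.2)]; omega

lemma not_reach_child (hcm : c ∈ S.children t) : ¬ S.Reach c t := fun h =>
  absurd (reach_rank h) (by have := S.rank_lt t c hcm; omega)

lemma child_msg_eq {y : (Xvar ⊕ Zvar) → Option ℕ} {s : Option S.V} {j : ℕ}
    {c : S.V} {n : ℕ} (hn : S.rank c < n)
    (hchild_c : S.msg y c s j = ∑ᶠ σ ∈ S.subtreesAt c, S.msgSub σ y c s j) :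
    S.msgAux y n c s j
      = ∑ σ ∈ (subtreesAt_finite (S := S) c).toFinset, S.msgSubAux σ y n c s j := by
  rw [msgAux_fuel y n (S.rank c + 1) c s j hn (Nat.lt_succ_self _)]
  rw [show S.msgAux y (S.rank c + 1) c s j = S.msg y c s j from rfl, hchild_c,
    finsum_mem_eq_finite_toFinset_sum _ (subtreesAt_finite c)]
  refine Finset.sum_congr rfl fun σ hσ => ?_
  have Hσ : S.InRange σ := ((subtreesAt_finite c).mem_toFinset.mp hσ).1
  exact msgSubAux_congr y Hσ (S.rank c + 1) n c s j (Nat.lt_succ_self _) hn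
    (fun _ _ _ => rfl)

lemma sum_fiber (hS : S.Valid) {t : S.V} (hsum : S.isSum t) {k : ℕ}
    (hkm : k < (S.children t).length) (f : (S.V → ℕ) → ℝ)
    (hf : ∀ σ σ', S.InRange σ → S.InRange σ' →
      (∀ u, S.Reach ((S.children t).getD k t) u → S.isSum u → σ u = σ' u) →
      f σ = f σ') :
    ∑ σ ∈ (subtreesAt_finite (S := S) t).toFinset.filter (fun σ => σ t = k), f σ
      = ∑ σ ∈ (subtreesAt_finite (S := S) ((S.children t).getD k t)).toFinset, f σ := by
  set c := (S.children t).getD k t with hc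
  have hcm : c ∈ S.children t := getD_mem_children_s10 hkm
  have hnr : ¬ S.Reach c t := not_reach_child hcm
  have hlen : 0 < (S.children t).length := by omega
  have hupd0 : ∀ σ : S.V → ℕ, S.InRange σ → S.InRange (Function.update σ t 0) := by
    intro σ h1 u hu
    by_cases h : u = t
    · subst h; rw [Function.update_self]; exact hlen
    · rw [Function.update_of_ne h]; exact h1 u hu
  have hagree0 : ∀ σ : S.V → ℕ, ∀ u, S.Reach c u → S.isSum u →
      σ u = Function.update σ t 0 u := by
    intro σ u hu _
    rw [Function.update_of_ne (fun h => hnr (by rw [← h]; exact hu))]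
  refine Finset.sum_nbij' (fun σ => Function.update σ t 0)
    (fun σ => Function.update σ t k) ?_ ?_ ?_ ?_ ?_
  · intro σ hσ
    rw [Finset.mem_filter, (subtreesAt_finite t).mem_toFinset] at hσ
    obtain ⟨⟨h1, h2⟩, hσt⟩ := hσ
    rw [(subtreesAt_finite c).mem_toFinset]
    refine ⟨hupd0 σ h1, ?_⟩
    intro u hu
    show Function.update σ t 0 u = 0
    by_cases h : u = t
    · subst h; exact Function.update_self _ _ _
    · rw [Function.update_of_ne h]
      apply h2
      rintro ⟨hkeep, hs⟩
      apply hu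
      refine ⟨?_, hs⟩
      rcases keepAt_cases hkeep with rfl | ⟨b, hb, hkb⟩
      · exact absurd rfl h
      · have hbc : b = c := by
          rcases hb with ⟨hns, _⟩ | ⟨_, hb⟩
          · exact absurd hsum hns
          · rw [hb, hσt]
        subst hbc
        exact keepAt_congr h1 (hagree0 σ) hkb
  · intro σ hσ
    rw [(subtreesAt_finite c).mem_toFinset] at hσ
    obtain ⟨h1, h2⟩ := hσ
    rw [Finset.mem_filter, (subtreesAt_finite t).mem_toFinset]
    have Hσ' : S.InRange (Function.update σ t k) := by
      intro u hu
      by_cases h : u = t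
      · subst h; rw [Function.update_self]; exact hkm
      · rw [Function.update_of_ne h]; exact h1 u hu
    have hagree : ∀ u, S.Reach c u → S.isSum u → σ u = Function.update σ t k u := by
      intro u hu _
      rw [Function.update_of_ne (fun h => hnr (by rw [← h]; exact hu))]
    refine ⟨⟨Hσ', ?_⟩, Function.update_self _ _ _⟩
    intro u hu
    show Function.update σ t k u = 0
    by_cases h : u = t
    · subst h; exact absurd ⟨KeepAt.refl _, hsum⟩ hu
    · rw [Function.update_of_ne h]
      apply h2
      rintro ⟨hkeep, hs⟩
      apply hu
      refine ⟨?_, hs⟩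
      have hedge : S.subEdge (Function.update σ t k) t c :=
        Or.inr ⟨hsum, by rw [Function.update_self]⟩
      exact keepAt_of_edge hedge (keepAt_congr h1 hagree hkeep)
  · intro σ hσ
    rw [Finset.mem_filter] at hσ
    funext v
    show Function.update (Function.update σ t 0) t k v = σ v
    by_cases h : v = t
    · subst h; rw [Function.update_self, hσ.2]
    · rw [Function.update_of_ne h, Function.update_of_ne h]
  · intro σ hσ
    rw [(subtreesAt_finite c).mem_toFinset] at hσ
    have hσt : σ t = 0 := by
      apply hσ.2
      rintro ⟨hkeep, _⟩
      exact hnr (keepAt_reach hσ.1 hkeep)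
    funext v
    show Function.update (Function.update σ t k) t 0 v = σ v
    by_cases h : v = t
    · subst h; rw [Function.update_self, hσt]
    · rw [Function.update_of_ne h, Function.update_of_ne h]
  · intro σ hσ
    rw [Finset.mem_filter, (subtreesAt_finite t).mem_toFinset] at hσ
    exact hf σ _ hσ.1.1 (hupd0 σ hσ.1.1) (hagree0 σ)

lemma sum_node_eq (hS : S.Valid) {t : S.V} (hsum : S.isSum t) (w : ℕ → ℝ)
    (y : (Xvar ⊕ Zvar) → Option ℕ) (s : Option S.V) (j : ℕ)
    (hchild : ∀ c ∈ S.children t, ∀ (s : Option S.V) (j : ℕ)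
      (y : (Xvar ⊕ Zvar) → Option ℕ),
      S.msg y c s j = ∑ᶠ σ ∈ S.subtreesAt c, S.msgSub σ y c s j) :
    ∑ k ∈ Finset.range (S.children t).length,
        w k * S.msgAux y (S.rank t) ((S.children t).getD k t) s j
      = ∑ σ ∈ (subtreesAt_finite (S := S) t).toFinset,
          w (σ t) * S.msgSubAux σ y (S.rank t) ((S.children t).getD (σ t) t) s j := by
  have hmaps : ∀ σ ∈ (subtreesAt_finite (S := S) t).toFinset,
      σ t ∈ Finset.range (S.children t).length := by
    intro σ hσ
    rw [(subtreesAt_finite t).mem_toFinset] at hσ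
    exact Finset.mem_range.mpr (hσ.1 t hsum)
  rw [← Finset.sum_fiberwise_of_maps_to hmaps
    (fun σ => w (σ t) * S.msgSubAux σ y (S.rank t) ((S.children t).getD (σ t) t) s j)]
  refine Finset.sum_congr rfl fun k hk => ?_
  rw [Finset.mem_range] at hk
  have hcm := getD_mem_children_s10 (S := S) (t := t) hk
  have hr := S.rank_lt t _ hcm
  have step1 : ∑ σ ∈ (subtreesAt_finite (S := S) t).toFinset.filter (fun σ => σ t = k),
      w (σ t) * S.msgSubAux σ y (S.rank t) ((S.children t).getD (σ t) t) s j
        = ∑ σ ∈ (subtreesAt_finite (S := S) t).toFinset.filter (fun σ => σ t = k),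
      w k * S.msgSubAux σ y (S.rank t) ((S.children t).getD k t) s j := by
    refine Finset.sum_congr rfl fun σ hσ => ?_
    rw [(Finset.mem_filter.mp hσ).2]
  rw [step1, sum_fiber hS hsum hk
    (fun σ => w k * S.msgSubAux σ y (S.rank t) ((S.children t).getD k t) s j)
    (fun σ σ' Hσ Hσ' hag => by
      rw [msgSubAux_congr y Hσ (S.rank t) (S.rank t) _ s j hr hr hag]),
    ← Finset.mul_sum, ← child_msg_eq hr (hchild _ hcm s j y)]

end SPGM

namespace SPGM

variable {Xvar Zvar : Type} {Xdom : Xvar → ℕ} {Zdom : Zvar → ℕ}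
variable {S : SPGM Xvar Zvar Xdom Zdom}

/-- Restriction of a choice function to the subtree rooted at `c`. -/
def restrictσ (S : SPGM Xvar Zvar Xdom Zdom) (σ : S.V → ℕ) (c : S.V) : S.V → ℕ :=
  fun v => if S.KeepAt σ c v ∧ S.isSum v then σ v else 0

lemma restrictσ_inRange (hS : S.Valid) {σ : S.V → ℕ} (Hσ : S.InRange σ) (c : S.V) :
    S.InRange (S.restrictσ σ c) := by
  intro u hu
  unfold restrictσ
  by_cases h : S.KeepAt σ c u ∧ S.isSum u
  · rw [if_pos h]; exact Hσ u hu
  · rw [if_neg h]; exact List.length_pos_iff.mpr (hS.sum_child u hu)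

section ProdCase

variable {t : S.V}

lemma prod_reach_disjoint (hS : S.Valid) (hk : S.kind t = SPGMKind.prod)
    {c c' : S.V} (hc : c ∈ S.children t) (hc' : c' ∈ S.children t) (hne : c ≠ c')
    {u : S.V} (h1 : S.Reach c u) (h2 : S.Reach c' u) : False := by
  have hp := (haveI : Std.Symm fun c c' : S.V => Disjoint (S.scope c) (S.scope c') :=
    ⟨fun a b hd => hd.symm⟩; (hS.prod_scope t hk).forall)
  exact not_reach_both hS (hp hc hc' hne) h1 h2

lemma prod_nodup (hS : S.Valid) (hk : S.kind t = SPGMKind.prod) :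
    (S.children t).Nodup := by
  refine (hS.prod_scope t hk).imp ?_
  intro a b hd hab
  subst hab
  obtain ⟨v, hv⟩ := scope_nonempty hS a
  exact Set.disjoint_left.mp hd hv hv

lemma keep_prod_sum_iff (hk : S.kind t = SPGMKind.prod) {σ : S.V → ℕ} {u : S.V}
    (hsu : S.isSum u) :
    S.KeepAt σ t u ↔ ∃ c ∈ S.children t, S.KeepAt σ c u := by
  constructor
  · intro h
    rcases keepAt_cases h with rfl | ⟨b, hb, hkb⟩
    · exact absurd hsu (not_isSum_of_prod hk)
    · rcases hb with ⟨_, hbc⟩ | ⟨hs, _⟩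
      · exact ⟨b, hbc, hkb⟩
      · exact absurd hs (not_isSum_of_prod hk)
  · rintro ⟨c, hc, hkc⟩
    exact keepAt_of_edge (Or.inl ⟨not_isSum_of_prod hk, hc⟩) hkc

lemma restrict_agree (hS : S.Valid) (hk : S.kind t = SPGMKind.prod)
    {σ : S.V → ℕ} (hσ : σ ∈ S.subtreesAt t) {c : S.V} (hc : c ∈ S.children t) :
    ∀ u, S.Reach c u → S.isSum u → S.restrictσ σ c u = σ u := by
  intro u hu hsu
  unfold restrictσ
  by_cases h : S.KeepAt σ c u ∧ S.isSum u
  · rw [if_pos h]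
  · rw [if_neg h]
    refine (hσ.2 u ?_).symm
    rintro ⟨hkeep, hsu'⟩
    obtain ⟨c', hc', hkc'⟩ := (keep_prod_sum_iff hk hsu').mp hkeep
    by_cases hcc : c' = c
    · subst hcc; exact h ⟨hkc', hsu'⟩
    · exact prod_reach_disjoint hS hk hc' hc hcc (keepAt_reach hσ.1 hkc') hu

lemma restrict_mem (hS : S.Valid) (hk : S.kind t = SPGMKind.prod)
    {σ : S.V → ℕ} (hσ : σ ∈ S.subtreesAt t) {c : S.V} (hc : c ∈ S.children t) :
    S.restrictσ σ c ∈ S.subtreesAt c := by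
  refine ⟨restrictσ_inRange hS hσ.1 c, ?_⟩
  intro u hu
  unfold restrictσ
  by_cases h : S.KeepAt σ c u ∧ S.isSum u
  · exfalso
    apply hu
    exact ⟨keepAt_congr hσ.1
      (fun v hv hsv => (restrict_agree hS hk hσ hc v hv hsv).symm) h.1, h.2⟩
  · rw [if_neg h]

/-- Combination of a family of choice functions for the children of `t`. -/
def combineσ (S : SPGM Xvar Zvar Xdom Zdom) (t : S.V)
    (p : ∀ a ∈ (S.children t).toFinset, S.V → ℕ) : S.V → ℕ :=
  fun v => ∑ c ∈ (S.children t).toFinset.attach, p c.1 c.2 v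

variable {p : ∀ a ∈ (S.children t).toFinset, S.V → ℕ}

lemma combine_agree (hS : S.Valid) (hk : S.kind t = SPGMKind.prod)
    (hp : ∀ c (hc : c ∈ (S.children t).toFinset), p c hc ∈ S.subtreesAt c)
    {c : S.V} (hc : c ∈ (S.children t).toFinset) :
    ∀ u, S.Reach c u → S.combineσ t p u = p c hc u := by
  intro u hu
  show (∑ c ∈ (S.children t).toFinset.attach, p c.1 c.2 u) = p c hc u
  refine Finset.sum_eq_single_of_mem (f := fun c : {x // x ∈ (S.children t).toFinset} => p c.1 c.2 u) ⟨c, hc⟩ (Finset.mem_attach _ _) ?_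
  rintro ⟨c', hc'⟩ _ hne
  refine (hp c' hc').2 u ?_
  rintro ⟨hkeep, _⟩
  have hcc : c' ≠ c := fun h => hne (Subtype.ext h)
  exact prod_reach_disjoint hS hk (List.mem_toFinset.mp hc') (List.mem_toFinset.mp hc)
    hcc (keepAt_reach (hp c' hc').1 hkeep) hu

lemma combine_inRange (hS : S.Valid) (hk : S.kind t = SPGMKind.prod)
    (hp : ∀ c (hc : c ∈ (S.children t).toFinset), p c hc ∈ S.subtreesAt c) :
    S.InRange (S.combineσ t p) := by
  intro u hu
  by_cases h : ∃ c : {x // x ∈ (S.children t).toFinset}, S.KeepAt (p c.1 c.2) c.1 u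
  · obtain ⟨⟨c, hc⟩, hkeep⟩ := h
    rw [combine_agree hS hk hp hc u (keepAt_reach (hp c hc).1 hkeep)]
    exact (hp c hc).1 u hu
  · push_neg at h
    have h0 : S.combineσ t p u = 0 := by
      unfold combineσ
      exact Finset.sum_eq_zero fun c _ => (hp c.1 c.2).2 u fun hcon => h c hcon.1
    rw [h0]
    exact List.length_pos_iff.mpr (hS.sum_child u hu)

lemma combine_mem (hS : S.Valid) (hk : S.kind t = SPGMKind.prod)
    (hp : ∀ c (hc : c ∈ (S.children t).toFinset), p c hc ∈ S.subtreesAt c) :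
    S.combineσ t p ∈ S.subtreesAt t := by
  refine ⟨combine_inRange hS hk hp, ?_⟩
  intro u hu
  unfold combineσ
  refine Finset.sum_eq_zero ?_
  rintro ⟨c, hc⟩ _
  refine (hp c hc).2 u ?_
  rintro ⟨hkeep, hsu⟩
  apply hu
  refine ⟨?_, hsu⟩
  have hkeep' : S.KeepAt (S.combineσ t p) c u :=
    keepAt_congr (hp c hc).1 (fun v hv _ => (combine_agree hS hk hp hc v hv).symm) hkeep
  exact keepAt_of_edge (Or.inl ⟨not_isSum_of_prod hk, List.mem_toFinset.mp hc⟩) hkeep'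

lemma restrict_combine (hS : S.Valid) (hk : S.kind t = SPGMKind.prod)
    (hp : ∀ c (hc : c ∈ (S.children t).toFinset), p c hc ∈ S.subtreesAt c)
    {c : S.V} (hc : c ∈ (S.children t).toFinset) :
    S.restrictσ (S.combineσ t p) c = p c hc := by
  funext v
  unfold restrictσ
  by_cases h : S.KeepAt (S.combineσ t p) c v ∧ S.isSum v
  · rw [if_pos h]
    exact combine_agree hS hk hp hc v (keepAt_reach (combine_inRange hS hk hp) h.1)
  · rw [if_neg h]
    refine ((hp c hc).2 v ?_).symm
    rintro ⟨hkeep, hsv⟩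
    apply h
    exact ⟨keepAt_congr (hp c hc).1
      (fun u hu _ => (combine_agree hS hk hp hc u hu).symm) hkeep, hsv⟩

lemma combine_restrict (hS : S.Valid) (hk : S.kind t = SPGMKind.prod)
    {σ : S.V → ℕ} (hσ : σ ∈ S.subtreesAt t) :
    S.combineσ t (fun c _ => S.restrictσ σ c) = σ := by
  have hp : ∀ c (hc : c ∈ (S.children t).toFinset), S.restrictσ σ c ∈ S.subtreesAt c :=
    fun c hc => restrict_mem hS hk hσ (List.mem_toFinset.mp hc)
  funext v
  by_cases h : ∃ c ∈ S.children t, S.KeepAt σ c v ∧ S.isSum v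
  · obtain ⟨c, hc, hkeep, hsv⟩ := h
    have hc' : c ∈ (S.children t).toFinset := List.mem_toFinset.mpr hc
    have := combine_agree hS hk hp hc' v (keepAt_reach hσ.1 hkeep)
    rw [this]
    exact restrict_agree hS hk hσ hc v (keepAt_reach hσ.1 hkeep) hsv
  · have h0 : ∀ c : {x // x ∈ (S.children t).toFinset}, S.restrictσ σ c.1 v = 0 := by
      rintro ⟨c, hc⟩
      unfold restrictσ
      rw [if_neg]
      rintro ⟨hkeep, hsv⟩
      exact h ⟨c, List.mem_toFinset.mp hc, hkeep, hsv⟩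
    have hv0 : σ v = 0 := by
      apply hσ.2
      rintro ⟨hkeep, hsv⟩
      obtain ⟨c, hc, hkc⟩ := (keep_prod_sum_iff hk hsv).mp hkeep
      exact h ⟨c, hc, hkc, hsv⟩
    show (∑ c ∈ (S.children t).toFinset.attach, S.restrictσ σ c.1 v) = σ v
    rw [hv0]
    exact Finset.sum_eq_zero fun c _ => h0 c

end ProdCase

end SPGM

/-- inductive step of the subtree-decomposition of SPGM messages.
Let `S` be a valid SPGM and `t` a node of `S` such that every message sent by every
child `c` of `t` satisfies, for every partial assignment `y`,
`μ_{c→s;j} = ∑_{τ ∈ T(S_c)} μ_{root(τ)→s;j}`, where `S_c` is the sub-SPGM rooted at `c`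
and the summand is the corresponding message computed within the subtree `τ`.  Then
every message sent by `t` satisfies the same identity with `T(S_t)` in place of
`T(S_c)`. -/
theorem spgm_message_eq_sum_subtrees {Xvar Zvar : Type} {Xdom : Xvar → ℕ} {Zdom : Zvar → ℕ}
    (S : SPGM Xvar Zvar Xdom Zdom) (hS : S.Valid) (hN : S.Normalized) (t : S.V)
    (hchild : ∀ c ∈ S.children t, ∀ (s : Option S.V) (j : ℕ)
      (y : (Xvar ⊕ Zvar) → Option ℕ),
      S.msg y c s j = ∑ᶠ σ ∈ S.subtreesAt c, S.msgSub σ y c s j) :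
    ∀ (s : Option S.V) (j : ℕ) (y : (Xvar ⊕ Zvar) → Option ℕ),
      S.msg y t s j = ∑ᶠ σ ∈ S.subtreesAt t, S.msgSub σ y t s j := by
  intro s j y
  open SPGM in
  rcases hk : S.kind t with x | _ | z | _
  · -- Vnode
    rcases hc : S.children t with _ | ⟨c, cs⟩
    · -- leaf Vnode
      have hA : S.subtreesAt t = {fun _ => 0} := by
        ext σ
        simp only [Set.mem_singleton_iff]
        constructor
        · rintro ⟨h1, h2⟩
          funext v
          apply h2
          rintro ⟨hkeep, hsv⟩
          rcases SPGM.keepAt_cases hkeep with rfl | ⟨b, hb, _⟩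
          · exact SPGM.not_isSum_of_vnode hk hsv
          · rcases hb with ⟨_, hbm⟩ | ⟨hs, _⟩
            · rw [hc] at hbm; cases hbm
            · exact SPGM.not_isSum_of_vnode hk hs
        · rintro rfl
          exact ⟨fun u hu => List.length_pos_iff.mpr (hS.sum_child u hu), fun u _ => rfl⟩
      rw [hA, finsum_mem_singleton]
      simp only [SPGM.msg, SPGM.msgSub, SPGM.msgAux, SPGM.msgSubAux, hk, hc]
    · -- Vnode with a unique child
      have hcs : cs = [] := by
        have h1 := hS.vnode_child t ⟨x, hk⟩
        rw [hc] at h1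
        simpa using h1
      subst hcs
      have hcm : c ∈ S.children t := by rw [hc]; exact List.mem_cons_self
      have hrc : S.rank c < S.rank t := S.rank_lt t c hcm
      have hA : S.subtreesAt t = S.subtreesAt c := by
        ext σ
        constructor
        · rintro ⟨h1, h2⟩
          refine ⟨h1, fun u hu => h2 u ?_⟩
          rintro ⟨hkeep, hsu⟩
          rcases SPGM.keepAt_cases hkeep with rfl | ⟨b, hb, hkb⟩
          · exact SPGM.not_isSum_of_vnode hk hsu
          · rcases hb with ⟨_, hbm⟩ | ⟨hs, _⟩
            · rw [hc, List.mem_singleton] at hbm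
              subst hbm
              exact hu ⟨hkb, hsu⟩
            · exact SPGM.not_isSum_of_vnode hk hs
        · rintro ⟨h1, h2⟩
          refine ⟨h1, fun u hu => h2 u ?_⟩
          rintro ⟨hkeep, hsu⟩
          exact hu ⟨SPGM.keepAt_of_edge
            (Or.inl ⟨SPGM.not_isSum_of_vnode hk, hcm⟩) hkeep, hsu⟩
      have key : ∀ k, S.msgAux y (S.rank t) c (some t) k
          = ∑ σ ∈ (SPGM.subtreesAt_finite (S := S) c).toFinset,
              S.msgSubAux σ y (S.rank t) c (some t) k :=
        fun k => SPGM.child_msg_eq hrc (hchild c hcm (some t) k y)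
      rw [hA, finsum_mem_eq_finite_toFinset_sum _ (SPGM.subtreesAt_finite c)]
      simp only [SPGM.msg, SPGM.msgSub, SPGM.msgAux, SPGM.msgSubAux, hk, hc]
      rw [Finset.sum_comm]
      refine Finset.sum_congr rfl fun k _ => ?_
      rw [key k, Finset.mul_sum]
  · -- product node
    have hnd := SPGM.prod_nodup hS hk
    rw [finsum_mem_eq_finite_toFinset_sum _ (SPGM.subtreesAt_finite t)]
    simp only [SPGM.msg, SPGM.msgSub, SPGM.msgAux, SPGM.msgSubAux, hk]
    rw [← List.prod_toFinset _ hnd]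
    have key : ∀ c ∈ (S.children t).toFinset, S.msgAux y (S.rank t) c s j
        = ∑ σ ∈ (SPGM.subtreesAt_finite (S := S) c).toFinset,
            S.msgSubAux σ y (S.rank t) c s j :=
      fun c hc => SPGM.child_msg_eq (S.rank_lt t c (List.mem_toFinset.mp hc))
        (hchild c (List.mem_toFinset.mp hc) s j y)
    rw [Finset.prod_congr rfl key, Finset.prod_sum]
    refine Finset.sum_nbij' (fun p => S.combineσ t p)
      (fun σ => fun c _ => S.restrictσ σ c) ?_ ?_ ?_ ?_ ?_
    · intro p hp
      rw [Finset.mem_pi] at hp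
      rw [(SPGM.subtreesAt_finite t).mem_toFinset]
      exact SPGM.combine_mem hS hk fun c hc =>
        ((SPGM.subtreesAt_finite c).mem_toFinset.mp (hp c hc))
    · intro σ hσ
      rw [(SPGM.subtreesAt_finite t).mem_toFinset] at hσ
      rw [Finset.mem_pi]
      intro c hc
      rw [(SPGM.subtreesAt_finite c).mem_toFinset]
      exact SPGM.restrict_mem hS hk hσ (List.mem_toFinset.mp hc)
    · intro p hp
      rw [Finset.mem_pi] at hp
      funext c hc
      exact SPGM.restrict_combine hS hk
        (fun c hc => (SPGM.subtreesAt_finite c).mem_toFinset.mp (hp c hc)) hc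
    · intro σ hσ
      rw [(SPGM.subtreesAt_finite t).mem_toFinset] at hσ
      exact SPGM.combine_restrict hS hk hσ
    · intro p hp
      rw [Finset.mem_pi] at hp
      have hp' : ∀ c (hc : c ∈ (S.children t).toFinset), p c hc ∈ S.subtreesAt c :=
        fun c hc => (SPGM.subtreesAt_finite c).mem_toFinset.mp (hp c hc)
      rw [← List.prod_toFinset _ hnd, ← Finset.prod_attach ((S.children t).toFinset)
        (fun c => S.msgSubAux (S.combineσ t p) y (S.rank t) c s j)]
      refine Finset.prod_congr rfl fun c _ => ?_
      have hrc : S.rank c.1 < S.rank t := S.rank_lt t c.1 (List.mem_toFinset.mp c.2)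
      exact SPGM.msgSubAux_congr y (hp' c.1 c.2).1 (S.rank t) (S.rank t) c.1 s j hrc hrc
        (fun u hu _ => (SPGM.combine_agree hS hk hp' c.2 u hu).symm)
  · -- observed sum node
    rw [finsum_mem_eq_finite_toFinset_sum _ (SPGM.subtreesAt_finite t)]
    simp only [SPGM.msg, SPGM.msgSub, SPGM.msgAux, SPGM.msgSubAux, hk]
    exact SPGM.sum_node_eq hS (Or.inl ⟨z, hk⟩)
      (fun k => Indicator y (Sum.inr z) k * S.Q t k) y s j hchild
  · -- unobserved sum node
    rw [finsum_mem_eq_finite_toFinset_sum _ (SPGM.subtreesAt_finite t)]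
    simp only [SPGM.msg, SPGM.msgSub, SPGM.msgAux, SPGM.msgSubAux, hk]
    exact SPGM.sum_node_eq hS (Or.inr hk) (S.W t) y s j hchild
end
end
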